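/- Suppose there exists a finite nonabelian group with exactly one noncommutator. Then there exists an infinite group of finite exponent with exactly one noncommutator. -/

import Mathlib

/-- The subgroup of finitely supported elements of `ℕ → G`. -/
private def Dsub (G : Type) [Group G] : Subgroup (ℕ → G) where
  carrier := {x | {i | x i ≠ 1}.Finite}
  mul_mem' := by
    intro a b ha hb
    refine Set.Finite.subset (ha.union hb) ?_
    intro i hi
    simp only [Set.mem_setOf_eq, Set.mem_union, Pi.mul_apply] at hi ⊢
    by_contra hc
    push_neg at hc
    rw [hc.1, hc.2, one_mul] at hi
    exact hi rfl
  one_mem' := by simp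
  inv_mem' := by
    intro a ha
    refine Set.Finite.subset ha ?_
    intro i hi
    simp only [Set.mem_setOf_eq, Pi.inv_apply, ne_eq, inv_eq_one] at hi ⊢
    exact hi

private lemma mem_Dsub {G : Type} [Group G] {x : ℕ → G} :
    x ∈ Dsub G ↔ {i | x i ≠ 1}.Finite := Iff.rfl

/-- The subgroup of even-weight `t`-tuples. -/
private def Nsub (G : Type) [Group G] (t : G) (ht2 : t * t = 1) : Subgroup (Dsub G) where
  carrier := {x | ∃ s : Finset ℕ, Even s.card ∧
    ∀ i, (x : ℕ → G) i = if i ∈ s then t else 1}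
  one_mem' := ⟨∅, by simp, by intro i; simp⟩
  mul_mem' := by
    classical
    rintro a b ⟨s, hs, hsa⟩ ⟨u, hu, hub⟩
    refine ⟨symmDiff s u, ?_, ?_⟩
    · have h1 : (symmDiff s u).card = (s \ u).card + (u \ s).card := by
        rw [symmDiff_def]
        exact Finset.card_union_of_disjoint disjoint_sdiff_sdiff
      have h2 : (s \ u).card + (s ∩ u).card = s.card := Finset.card_sdiff_add_card_inter s u
      have h3 : (u \ s).card + (u ∩ s).card = u.card := Finset.card_sdiff_add_card_inter u s
      have h4 : (s ∩ u).card = (u ∩ s).card := by rw [Finset.inter_comm]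
      rw [Nat.even_iff] at hs hu ⊢
      omega
    · intro i
      have hmul : ((a * b : Dsub G) : ℕ → G) i = (a : ℕ → G) i * (b : ℕ → G) i := rfl
      rw [hmul, hsa i, hub i]
      by_cases h1 : i ∈ s <;> by_cases h2 : i ∈ u <;>
        simp [Finset.mem_symmDiff, h1, h2, ht2]
  inv_mem' := by
    rintro a ⟨s, hs, hsa⟩
    refine ⟨s, hs, fun i => ?_⟩
    have hinv : ((a⁻¹ : Dsub G) : ℕ → G) i = ((a : ℕ → G) i)⁻¹ := rfl
    rw [hinv, hsa i]
    by_cases h1 : i ∈ s <;> simp [h1]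
    exact inv_eq_of_mul_eq_one_left ht2

/-- If there exists a finite nonabelian group with exactly one noncommutator, then there
exists an infinite group of finite exponent with exactly one noncommutator. -/
theorem stmt_16
    (h : ∃ (G : Type) (_ : Group G) (_ : Finite G),
      (¬ ∀ a b : G, a * b = b * a) ∧ ∃! t : G, ¬ ∃ a b : G, t = a⁻¹ * b⁻¹ * a * b) :
    ∃ (H : Type) (_ : Group H), Infinite H ∧ (∃ n : ℕ, 0 < n ∧ ∀ g : H, g ^ n = 1) ∧
      ∃! t : H, ¬ ∃ a b : H, t = a⁻¹ * b⁻¹ * a * b := by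
  classical
  obtain ⟨G, _, _, hNA, t, ht, huniq⟩ := h
  -- everything different from t is a commutator
  have hdich : ∀ g : G, g ≠ t → ∃ a b : G, g = a⁻¹ * b⁻¹ * a * b := by
    intro g hg
    by_contra hc
    exact hg (huniq g hc)
  -- t has order 2
  have htinv : t⁻¹ = t := by
    refine huniq _ ?_
    rintro ⟨a, b, hab⟩
    refine ht ⟨b, a, ?_⟩
    rw [← inv_inv t, hab]
    group
  have htt : t * t = 1 := by
    nth_rewrite 2 [← htinv]
    exact mul_inv_cancel t
  -- t is central
  have hcent : ∀ g : G, g * t = t * g := by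
    intro g
    have h1 : g * t * g⁻¹ = t := by
      refine huniq _ ?_
      rintro ⟨a, b, hab⟩
      refine ht ⟨g⁻¹ * a * g, g⁻¹ * b * g, ?_⟩
      have h2 : t = g⁻¹ * (g * t * g⁻¹) * g := by group
      rw [h2, hab]
      group
    calc g * t = g * t * g⁻¹ * g := by group
    _ = t * g := by rw [h1]
  have htne1 : t ≠ 1 := by
    rintro rfl
    exact ht ⟨1, 1, by group⟩
  -- there is an element outside {1, t}
  have hg0 : ∃ g : G, g ≠ 1 ∧ g ≠ t := by
    by_contra hc
    push_neg at hc
    apply hNA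
    intro a b
    rcases eq_or_ne a 1 with rfl | ha
    · rw [one_mul, mul_one]
    · rcases eq_or_ne b 1 with rfl | hb
      · rw [one_mul, mul_one]
      · rw [hc a ha, hc b hb]
  -- the quotient group
  haveI hNnorm : (Nsub G t htt).Normal := by
    constructor
    rintro n ⟨s, hs, hn⟩ g
    refine ⟨s, hs, fun i => ?_⟩
    have hco : ((g * n * g⁻¹ : Dsub G) : ℕ → G) i
        = (g : ℕ → G) i * (n : ℕ → G) i * ((g : ℕ → G) i)⁻¹ := rfl
    rw [hco, hn i]
    by_cases h1 : i ∈ s <;> simp only [h1, if_true, if_false]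
    · rw [hcent ((g : ℕ → G) i)]
      group
    · group
  refine ⟨(Dsub G) ⧸ (Nsub G t htt), inferInstance, ?_, ?_, ?_⟩
  -- Infinite
  · obtain ⟨g₀, hg1, hgt⟩ := hg0
    have hemem : ∀ n : ℕ, (fun i => if i = n then g₀ else 1) ∈ Dsub G := by
      intro n
      refine mem_Dsub.2 (Set.Finite.subset (Set.finite_singleton n) ?_)
      intro i hi
      simp only [Set.mem_setOf_eq] at hi
      by_contra hin
      simp only [Set.mem_singleton_iff] at hin
      rw [if_neg hin] at hi
      exact hi rfl
    set e : ℕ → Dsub G := fun n => ⟨fun i => if i = n then g₀ else 1, hemem n⟩ with he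
    have hinj : Function.Injective (fun n => (QuotientGroup.mk (e n) :
        (Dsub G) ⧸ (Nsub G t htt))) := by
      intro n m hnm
      by_contra hne
      rw [QuotientGroup.eq] at hnm
      obtain ⟨s, hs, hco⟩ := hnm
      have h1 := hco n
      have h2 : (((e n)⁻¹ * e m : Dsub G) : ℕ → G) n
          = (if n = n then g₀ else 1)⁻¹ * (if n = m then g₀ else 1) := rfl
      rw [h2, if_pos rfl, if_neg hne, mul_one] at h1
      by_cases h3 : n ∈ s
      · rw [if_pos h3] at h1
        apply hgt
        rw [← htinv, ← h1, inv_inv]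
      · rw [if_neg h3, inv_eq_one] at h1
        exact hg1 h1
    exact Infinite.of_injective _ hinj
  -- finite exponent
  · refine ⟨Nat.card G, Nat.card_pos, ?_⟩
    intro g
    refine QuotientGroup.induction_on g ?_
    intro z
    rw [← QuotientGroup.mk_pow]
    have hz : z ^ Nat.card G = 1 := by
      ext i
      have h1 : ((z ^ Nat.card G : Dsub G) : ℕ → G) i = ((z : ℕ → G) i) ^ Nat.card G := by
        rw [SubgroupClass.coe_pow]
        rfl
      rw [h1]
      have : ((z : ℕ → G) i) ^ Nat.card G = 1 := by
        have hcard : Nat.card G = Nat.card G := rfl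
        exact pow_card_eq_one'
      rw [this]
      rfl
    rw [hz]
    rfl
  -- exactly one noncommutator
  · have htDmem : (fun i => if i = 0 then t else 1) ∈ Dsub G := by
      refine mem_Dsub.2 (Set.Finite.subset (Set.finite_singleton 0) ?_)
      intro i hi
      simp only [Set.mem_setOf_eq] at hi
      by_contra hin
      simp only [Set.mem_singleton_iff] at hin
      rw [if_neg hin] at hi
      exact hi rfl
    set tD : Dsub G := ⟨fun i => if i = 0 then t else 1, htDmem⟩ with htD
    -- coordinatewise commutators give commutators in Dsub G
    have hcw : ∀ y : Dsub G, (∀ i, ∃ a b : G, (y : ℕ → G) i = a⁻¹ * b⁻¹ * a * b) →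
        ∃ a b : Dsub G, y = a⁻¹ * b⁻¹ * a * b := by
      intro y hy
      choose A B hAB using hy
      set A' : ℕ → G := fun i => if (y : ℕ → G) i = 1 then 1 else A i with hA'
      set B' : ℕ → G := fun i => if (y : ℕ → G) i = 1 then 1 else B i with hB'
      have hyfin : {i | (y : ℕ → G) i ≠ 1}.Finite := y.2
      have hAmem : A' ∈ Dsub G := by
        refine mem_Dsub.2 (Set.Finite.subset hyfin ?_)
        intro i hi
        simp only [Set.mem_setOf_eq, hA'] at hi ⊢
        intro hc
        rw [if_pos hc] at hi
        exact hi rfl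
      have hBmem : B' ∈ Dsub G := by
        refine mem_Dsub.2 (Set.Finite.subset hyfin ?_)
        intro i hi
        simp only [Set.mem_setOf_eq, hB'] at hi ⊢
        intro hc
        rw [if_pos hc] at hi
        exact hi rfl
      refine ⟨⟨A', hAmem⟩, ⟨B', hBmem⟩, ?_⟩
      ext i
      have hco : (((⟨A', hAmem⟩ : Dsub G)⁻¹ * (⟨B', hBmem⟩ : Dsub G)⁻¹
          * ⟨A', hAmem⟩ * ⟨B', hBmem⟩ : Dsub G) : ℕ → G) i
          = (A' i)⁻¹ * (B' i)⁻¹ * A' i * B' i := rfl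
      rw [hco]
      by_cases hc : (y : ℕ → G) i = 1
      · simp only [hA', hB', if_pos hc]
        rw [hc]
        group
      · simp only [hA', hB', if_neg hc]
        exact hAB i
    refine ⟨QuotientGroup.mk tD, ?_, ?_⟩
    -- tD is not a commutator
    · rintro ⟨a, b, hab⟩
      obtain ⟨a', rfl⟩ := QuotientGroup.mk_surjective a
      obtain ⟨b', rfl⟩ := QuotientGroup.mk_surjective b
      rw [← QuotientGroup.mk_inv, ← QuotientGroup.mk_inv, ← QuotientGroup.mk_mul,
        ← QuotientGroup.mk_mul, ← QuotientGroup.mk_mul, QuotientGroup.eq] at hab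
      obtain ⟨s, hs, hco⟩ := hab
      have hcoord : ∀ i, (if i = 0 then t else 1)⁻¹ *
          (((a' : ℕ → G) i)⁻¹ * ((b' : ℕ → G) i)⁻¹ * (a' : ℕ → G) i * (b' : ℕ → G) i)
          = if i ∈ s then t else 1 := by
        intro i
        have h1 : ((tD⁻¹ * (a'⁻¹ * b'⁻¹ * a' * b') : Dsub G) : ℕ → G) i
            = (if i = 0 then t else 1)⁻¹ *
            (((a' : ℕ → G) i)⁻¹ * ((b' : ℕ → G) i)⁻¹ * (a' : ℕ → G) i * (b' : ℕ → G) i) := rfl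
        rw [← h1, hco i]
      have hsub : s ⊆ {0} := by
        intro i hi
        simp only [Finset.mem_singleton]
        by_contra hne
        have h1 := hcoord i
        rw [if_neg hne, if_pos hi, inv_one, one_mul] at h1
        exact ht ⟨(a' : ℕ → G) i, (b' : ℕ → G) i, h1.symm⟩
      have hsempty : s = ∅ := by
        rcases Finset.subset_singleton_iff.1 hsub with h1 | h1
        · exact h1
        · exfalso
          rw [h1] at hs
          simp at hs
      have h1 := hcoord 0
      rw [hsempty] at h1
      simp only [Finset.notMem_empty, if_false, eq_self_iff_true, if_true] at h1
      exact ht ⟨(a' : ℕ → G) 0, (b' : ℕ → G) 0, inv_mul_eq_one.mp h1⟩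
    -- uniqueness
    · intro y hy
      obtain ⟨x, rfl⟩ := QuotientGroup.mk_surjective y
      -- every coordinate of x is 1 or t
      have hx1t : ∀ i, (x : ℕ → G) i = 1 ∨ (x : ℕ → G) i = t := by
        by_contra hcon
        push_neg at hcon
        obtain ⟨j, hj1, hjt⟩ := hcon
        apply hy
        set S : Finset ℕ := (x.2 : Set.Finite {i | (x : ℕ → G) i ≠ 1}).toFinset.filter
          (fun i => (x : ℕ → G) i = t) with hS
        have hSmem : ∀ i, i ∈ S ↔ (x : ℕ → G) i = t := by
          intro i
          simp only [hS, Finset.mem_filter, Set.Finite.mem_toFinset, Set.mem_setOf_eq]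
          constructor
          · exact fun hh => hh.2
          · intro hh
            exact ⟨(Set.Finite.mem_toFinset (x.2 : Set.Finite {i | (x : ℕ → G) i ≠ 1})).2 (by show (x : ℕ → G) i ≠ 1; rw [hh]; exact htne1), hh⟩
        have hjS : j ∉ S := fun hc => hjt ((hSmem j).1 hc)
        set s' : Finset ℕ := if Even S.card then S else insert j S with hs'def
        have hs'even : Even s'.card := by
          rw [hs'def]
          by_cases hE : Even S.card
          · rw [if_pos hE]; exact hE
          · rw [if_neg hE, Finset.card_insert_of_notMem hjS]
            rw [Nat.even_add_one]
            exact hE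
        have hnmem' : (fun i => if i ∈ s' then t else 1) ∈ Dsub G := by
          refine mem_Dsub.2 (Set.Finite.subset (s' : Finset ℕ).finite_toSet ?_)
          intro i hi
          simp only [Set.mem_setOf_eq] at hi
          by_contra hin
          rw [if_neg (by simpa using hin)] at hi
          exact hi rfl
        set nelt : Dsub G := ⟨fun i => if i ∈ s' then t else 1, hnmem'⟩ with hnelt
        have hnN : nelt ∈ Nsub G t htt := ⟨s', hs'even, fun i => rfl⟩
        have hcwapp : ∀ i, ∃ a b : G, ((x * nelt : Dsub G) : ℕ → G) i = a⁻¹ * b⁻¹ * a * b := by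
          intro i
          have h1 : ((x * nelt : Dsub G) : ℕ → G) i
              = (x : ℕ → G) i * (if i ∈ s' then t else 1) := rfl
          rw [h1]
          by_cases hiS : i ∈ S
          · have hxi : (x : ℕ → G) i = t := (hSmem i).1 hiS
            have his' : i ∈ s' := by
              rw [hs'def]
              by_cases hE : Even S.card
              · rw [if_pos hE]; exact hiS
              · rw [if_neg hE]; exact Finset.mem_insert_of_mem hiS
            rw [if_pos his', hxi, htt]
            exact ⟨1, 1, by group⟩
          · have hxit : (x : ℕ → G) i ≠ t := fun hc => hiS ((hSmem i).2 hc)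
            by_cases his' : i ∈ s'
            · rw [if_pos his']
              refine hdich _ ?_
              intro hc
              have hxi1 : (x : ℕ → G) i = 1 :=
                mul_right_cancel (b := t) (by rw [one_mul]; exact hc)
              have hij : i = j := by
                rw [hs'def] at his'
                by_cases hE : Even S.card
                · rw [if_pos hE] at his'; exact absurd his' hiS
                · rw [if_neg hE] at his'
                  rcases Finset.mem_insert.1 his' with h2 | h2
                  · exact h2
                  · exact absurd h2 hiS
              rw [hij] at hxi1
              exact absurd hxi1 hj1
            · rw [if_neg his', mul_one]
              exact hdich _ hxit
        obtain ⟨a, b, hab⟩ := hcw _ hcwapp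
        refine ⟨QuotientGroup.mk a, QuotientGroup.mk b, ?_⟩
        rw [← QuotientGroup.mk_inv, ← QuotientGroup.mk_inv, ← QuotientGroup.mk_mul,
          ← QuotientGroup.mk_mul, ← QuotientGroup.mk_mul, ← hab]
        rw [QuotientGroup.eq]
        have : x⁻¹ * (x * nelt) = nelt := by group
        rw [this]
        exact hnN
      -- now all coordinates are in {1, t}
      set S : Finset ℕ := (x.2 : Set.Finite {i | (x : ℕ → G) i ≠ 1}).toFinset.filter
        (fun i => (x : ℕ → G) i = t) with hS
      have hSmem : ∀ i, i ∈ S ↔ (x : ℕ → G) i = t := by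
        intro i
        simp only [hS, Finset.mem_filter, Set.Finite.mem_toFinset, Set.mem_setOf_eq]
        constructor
        · exact fun hh => hh.2
        · intro hh
          exact ⟨(Set.Finite.mem_toFinset (x.2 : Set.Finite {i | (x : ℕ → G) i ≠ 1})).2 (by show (x : ℕ → G) i ≠ 1; rw [hh]; exact htne1), hh⟩
      have hxi : ∀ i, (x : ℕ → G) i = if i ∈ S then t else 1 := by
        intro i
        by_cases hiS : i ∈ S
        · rw [if_pos hiS]; exact (hSmem i).1 hiS
        · rw [if_neg hiS]
          rcases hx1t i with h1 | h1
          · exact h1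
          · exact absurd ((hSmem i).2 h1) hiS
      have hodd : ¬ Even S.card := by
        intro hE
        apply hy
        have hxN : x ∈ Nsub G t htt := ⟨S, hE, hxi⟩
        refine ⟨1, 1, ?_⟩
        have h1 : (QuotientGroup.mk x : (Dsub G) ⧸ (Nsub G t htt)) = 1 :=
          (QuotientGroup.eq_one_iff x).2 hxN
        rw [h1]
        group
      -- show mk x = mk tD
      rw [QuotientGroup.eq]
      set s'' : Finset ℕ := if 0 ∈ S then S.erase 0 else insert 0 S with hs''
      have hs''even : Even s''.card := by
        rw [hs'']
        by_cases h0 : 0 ∈ S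
        · rw [if_pos h0, Finset.card_erase_of_mem h0]
          rcases Nat.even_or_odd S.card with hE | hO
          · exact absurd hE hodd
          · obtain ⟨k, hk⟩ := hO
            have hkk : S.card - 1 = k + k := by omega
            rw [hkk]
            exact ⟨k, rfl⟩
        · rw [if_neg h0, Finset.card_insert_of_notMem h0, Nat.even_add_one]
          exact hodd
      refine ⟨s'', hs''even, ?_⟩
      intro i
      have h1 : ((x⁻¹ * tD : Dsub G) : ℕ → G) i
          = ((x : ℕ → G) i)⁻¹ * (if i = 0 then t else 1) := rfl
      rw [h1, hxi i]
      by_cases hi0 : i = 0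
      · subst hi0
        by_cases h0S : 0 ∈ S
        · have h0s'' : (0 : ℕ) ∉ s'' := by
            rw [hs'', if_pos h0S]
            simp
          rw [if_pos h0S, if_pos rfl, if_neg h0s'', htinv, htt]
        · have h0s'' : (0 : ℕ) ∈ s'' := by
            rw [hs'', if_neg h0S]
            exact Finset.mem_insert_self 0 S
          rw [if_neg h0S, if_pos rfl, if_pos h0s'', inv_one, one_mul]
      · have hiss : i ∈ s'' ↔ i ∈ S := by
          rw [hs'']
          by_cases h0S : 0 ∈ S
          · rw [if_pos h0S, Finset.mem_erase]
            exact ⟨fun hh => hh.2, fun hh => ⟨hi0, hh⟩⟩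
          · rw [if_neg h0S, Finset.mem_insert]
            exact ⟨fun hh => hh.resolve_left hi0, fun hh => Or.inr hh⟩
        by_cases hiS : i ∈ S
        · rw [if_pos hiS, if_neg hi0, if_pos (hiss.2 hiS), mul_one, htinv]
        · rw [if_neg hiS, if_neg hi0, if_neg (fun hc => hiS (hiss.1 hc)), inv_one, one_mul]
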